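/- Fix 0 < ε < 1. For each integer n ≥ 2, let F_n be a measurable set in a probability space with P(F_n) = 1/(2n^2), and set f_n = (n / ln^2 n) · 1_{F_n} and λ_n = 1 / (n · ln^{1+ε/2} n). Then for all sufficiently large n, E( (f_n/λ_n) · ln^{1-ε}(1 + f_n/λ_n) ) ≤ 1; consequently, the Luxemburg norms of f_n in the Orlicz space generated by g(x) = x ln^{1-ε}(1+x) satisfy ||f_n||_g ≤ 1/(n ln^{1+ε/2} n) for all sufficiently large n, and Σ_{n≥2} ||f_n||_g < ∞. -/

import Mathlib

open MeasureTheory ProbabilityTheory Filter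
open scoped ENNReal NNReal Topology

lemma bertrand_summable (p : ℝ) (hp : 1 < p) :
    Summable (fun n : ℕ => 1 / (((n : ℝ) + 2) * Real.log ((n : ℝ) + 2) ^ p)) := by
  set h : ℕ → ℝ := fun n => 1 / (((n : ℝ) + 2) * Real.log ((n : ℝ) + 2) ^ p) with hh
  have hp0 : (0:ℝ) ≤ p := by linarith
  have hdenpos : ∀ n : ℕ, 0 < ((n : ℝ) + 2) * Real.log ((n : ℝ) + 2) ^ p := by
    intro n
    have h1 : (1:ℝ) < (n:ℝ) + 2 := by
      have := Nat.cast_nonneg (α := ℝ) n; linarith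
    exact mul_pos (by linarith) (Real.rpow_pos_of_pos (Real.log_pos h1) p)
  have hnn : ∀ n, 0 ≤ h n := fun n => le_of_lt (by
    simpa [hh] using one_div_pos.2 (hdenpos n))
  have hmono : ∀ ⦃m k : ℕ⦄, 0 < m → m ≤ k → h k ≤ h m := by
    intro m k _ hmk
    have hc : (m:ℝ) ≤ (k:ℝ) := Nat.cast_le.2 hmk
    apply one_div_le_one_div_of_le (hdenpos m)
    have hlog : Real.log ((m:ℝ)+2) ≤ Real.log ((k:ℝ)+2) :=
      Real.log_le_log (by positivity) (by linarith)
    have hlognn : 0 ≤ Real.log ((m:ℝ)+2) :=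
      Real.log_nonneg (by have := Nat.cast_nonneg (α := ℝ) m; linarith)
    exact mul_le_mul (by linarith)
      (Real.rpow_le_rpow hlognn hlog hp0)
      (Real.rpow_nonneg hlognn p) (by linarith)
  have hcond : Summable (fun k : ℕ => (2:ℝ) ^ k * h (2 ^ k)) := by
    rw [← summable_nat_add_iff 1]
    have hb : Summable (fun n : ℕ => (Real.log 2) ^ (-p) * ((n:ℝ) + 1) ^ (-p)) := by
      apply Summable.mul_left
      have h0 : Summable (fun n : ℕ => ((n:ℝ)) ^ (-p)) :=
        Real.summable_nat_rpow.mpr (by linarith)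
      have := (summable_nat_add_iff 1).2 h0
      simpa using this
    apply Summable.of_nonneg_of_le (fun n => mul_nonneg (by positivity) (hnn _)) _ hb
    intro n
    set T : ℝ := (2:ℝ) ^ (n+1) with hT
    have hT1 : (1:ℝ) ≤ T := one_le_pow₀ (by norm_num)
    have hTpos : (0:ℝ) < T := by linarith
    set E : ℝ := ((n:ℝ) + 1) * Real.log 2 with hE
    have hEpos : 0 < E := by
      apply mul_pos (by positivity) (Real.log_pos (by norm_num))
    have hlogT : Real.log T = E := by
      rw [hT, Real.log_pow]; push_cast; ring
    have hlogge : E ≤ Real.log (T + 2) := by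
      rw [← hlogT]
      exact Real.log_le_log hTpos (by linarith)
    have hcast : ((2 ^ (n+1) : ℕ) : ℝ) = T := by push_cast; rfl
    have hval : (2:ℝ) ^ (n+1) * h (2 ^ (n+1)) = T / ((T + 2) * Real.log (T + 2) ^ p) := by
      simp only [hh, hcast]
      ring
    rw [hval]
    have hden2 : T * E ^ p ≤ (T + 2) * Real.log (T + 2) ^ p :=
      mul_le_mul (by linarith) (Real.rpow_le_rpow hEpos.le hlogge hp0)
        (Real.rpow_nonneg hEpos.le p) (by linarith)
    have hstep : T / ((T + 2) * Real.log (T + 2) ^ p) ≤ T / (T * E ^ p) :=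
      div_le_div_of_nonneg_left hTpos.le (by positivity) hden2
    refine hstep.trans ?_
    have hTE : T / (T * E ^ p) = E ^ (-p) := by
      rw [Real.rpow_neg hEpos.le]
      field_simp
    rw [hTE, hE, Real.mul_rpow (by positivity) (Real.log_nonneg (by norm_num)), mul_comm]
  exact (summable_condensed_iff_of_nonneg hnn hmono).1 hcond

/-- The Luxemburg norm of a nonnegative function `f` in the Orlicz space generated
by a convex function `g`, with respect to the measure `P`:
`‖f‖_g = inf { λ > 0 : E g(f/λ) ≤ 1 }`. -/
noncomputable def luxemburgNorm {Ω : Type*} [MeasurableSpace Ω]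
    (P : Measure Ω) (g : ℝ → ℝ) (f : Ω → ℝ) : ℝ :=
  sInf {l : ℝ | 0 < l ∧ ∫ ω, g (f ω / l) ∂P ≤ 1}

/-- **The Orlicz norm estimate in the construction of the non-tight example**
(Peligrad–Volný, proof of Lemma 5): with `P(F_n) = 1/(2n²)`,
`f_n = (n/ln² n) 1_{F_n}` and `λ_n = 1/(n ln^{1+ε/2} n)`, for all sufficiently
large `n` one has `E((f_n/λ_n) ln^{1-ε}(1 + f_n/λ_n)) ≤ 1`; consequently the
Luxemburg norms in the Orlicz space generated by `g(x) = x ln^{1-ε}(1+x)` satisfy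
`‖f_n‖_g ≤ 1/(n ln^{1+ε/2} n)` eventually, and `Σ_{n≥2} ‖f_n‖_g < ∞`. -/
theorem orlicz_norm_estimate_nontight_example
    {Ω : Type*} [m0 : MeasurableSpace Ω] (P : Measure Ω) [IsProbabilityMeasure P]
    (ε : ℝ) (hε0 : 0 < ε) (hε1 : ε < 1)
    (g : ℝ → ℝ) (hg : ∀ x : ℝ, g x = x * Real.log (1 + x) ^ (1 - ε))
    (Fset : ℕ → Set Ω) (hFmeas : ∀ n, MeasurableSet (Fset n))
    (hFP : ∀ n, 2 ≤ n → P (Fset n) = ENNReal.ofReal (1 / (2 * (n : ℝ) ^ 2)))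
    (f : ℕ → Ω → ℝ)
    (hf : ∀ n, 2 ≤ n →
      f n = Set.indicator (Fset n) (fun _ => (n : ℝ) / (Real.log n) ^ 2))
    (lam : ℕ → ℝ)
    (hlam : ∀ n, lam n = 1 / ((n : ℝ) * Real.log n ^ ((1 : ℝ) + ε / 2))) :
    (∃ N : ℕ, ∀ n, N ≤ n →
      ∫ ω, (f n ω / lam n) * Real.log (1 + f n ω / lam n) ^ (1 - ε) ∂P ≤ 1) ∧
    (∃ N : ℕ, ∀ n, N ≤ n →
      luxemburgNorm P g (f n) ≤ 1 / ((n : ℝ) * Real.log n ^ ((1 : ℝ) + ε / 2))) ∧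
    Summable (fun n : ℕ => luxemburgNorm P g (f (n + 2))) := by
  have hT : Tendsto (fun n : ℕ => Real.log n) atTop atTop :=
    Real.tendsto_log_atTop.comp tendsto_natCast_atTop_atTop
  have hev : ∀ᶠ n : ℕ in atTop,
      (3 ≤ n ∧ 1 ≤ Real.log n) ∧ (3/2 : ℝ) ^ (2/ε) ≤ Real.log n :=
    ((eventually_ge_atTop 3).and (hT.eventually_ge_atTop 1)).and
      (hT.eventually_ge_atTop _)
  obtain ⟨N, hN⟩ := eventually_atTop.1 hev
  -- the key integral estimate
  have key : ∀ n, N ≤ n →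
      ∫ ω, (f n ω / lam n) * Real.log (1 + f n ω / lam n) ^ (1 - ε) ∂P ≤ 1 := by
    intro n hn
    obtain ⟨⟨hn3, hL1⟩, hLc⟩ := hN n hn
    have hn2 : 2 ≤ n := by omega
    have hnR : (3:ℝ) ≤ (n:ℝ) := by exact_mod_cast hn3
    set L := Real.log (n:ℝ) with hLdef
    have hLpos : 0 < L := by linarith
    have hnpos : (0:ℝ) < (n:ℝ) := by linarith
    have hlampos : 0 < lam n := by
      rw [hlam]
      exact one_div_pos.2 (mul_pos hnpos (Real.rpow_pos_of_pos hLpos _))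
    set a : ℝ := ((n:ℝ) / L ^ 2) / lam n with ha
    have haval : a = (n:ℝ) ^ 2 * L ^ (ε/2 - 1) := by
      rw [ha, hlam, ← hLdef]
      have hrp : L ^ ((1:ℝ) + ε/2) = L ^ (ε/2 - 1) * L ^ 2 := by
        rw [← Real.rpow_natCast L 2, ← Real.rpow_add hLpos]
        congr 1
        push_cast
        ring
      rw [hrp]
      have h1 : L ≠ 0 := hLpos.ne'
      have h2 : L ^ (ε/2 - 1) ≠ 0 := (Real.rpow_pos_of_pos hLpos _).ne'
      have hn0 : (n:ℝ) ≠ 0 := by linarith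
      field_simp
    have hapos : 0 < a := by
      rw [haval]
      exact mul_pos (pow_pos hnpos 2) (Real.rpow_pos_of_pos hLpos _)
    have hale : a ≤ (n:ℝ) ^ 2 := by
      rw [haval]
      calc (n:ℝ)^2 * L ^ (ε/2 - 1) ≤ (n:ℝ)^2 * 1 := by
            exact mul_le_mul_of_nonneg_left
              (Real.rpow_le_one_of_one_le_of_nonpos hL1 (by linarith)) (by positivity)
        _ = (n:ℝ)^2 := mul_one _
    have hn2R : (1:ℝ) ≤ (n:ℝ)^2 := by nlinarith
    have hlog3 : Real.log (1 + a) ≤ 3 * L := by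
      have h1 : Real.log (1 + a) ≤ Real.log (2 * (n:ℝ)^2) :=
        Real.log_le_log (by linarith) (by nlinarith)
      rw [Real.log_mul two_ne_zero (by positivity), Real.log_pow] at h1
      have hlog2 : Real.log 2 ≤ 1 := by
        have := Real.log_le_sub_one_of_pos (by norm_num : (0:ℝ) < 2)
        linarith
      push_cast at h1
      linarith
    have hrq : Real.log (1 + a) ^ (1 - ε) ≤ 3 * L ^ (1 - ε) := by
      have h0 : 0 ≤ Real.log (1 + a) := Real.log_nonneg (by linarith)
      calc Real.log (1 + a) ^ (1 - ε) ≤ (3 * L) ^ (1 - ε) :=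
            Real.rpow_le_rpow h0 hlog3 (by linarith)
        _ = 3 ^ (1 - ε) * L ^ (1 - ε) := Real.mul_rpow (by norm_num) hLpos.le
        _ ≤ 3 * L ^ (1 - ε) := by
            have h31 : (3:ℝ) ^ (1 - ε) ≤ 3 ^ (1:ℝ) :=
              Real.rpow_le_rpow_of_exponent_le (by norm_num) (by linarith)
            rw [Real.rpow_one] at h31
            exact mul_le_mul_of_nonneg_right h31 (Real.rpow_nonneg hLpos.le _)
    have hfn := hf n hn2
    have hindic : (fun ω => (f n ω / lam n) * Real.log (1 + f n ω / lam n) ^ (1 - ε))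
        = Set.indicator (Fset n) (fun _ => a * Real.log (1 + a) ^ (1 - ε)) := by
      funext ω
      by_cases hω : ω ∈ Fset n
      · rw [hfn]
        simp [Set.indicator_of_mem hω, ha, hLdef]
      · rw [hfn]
        simp [Set.indicator_of_notMem hω,
          Real.zero_rpow (by linarith : (1:ℝ) - ε ≠ 0)]
    have hint : ∫ ω, (f n ω / lam n) * Real.log (1 + f n ω / lam n) ^ (1 - ε) ∂P
        = (1 / (2 * (n:ℝ)^2)) * (a * Real.log (1 + a) ^ (1 - ε)) := by
      rw [hindic, integral_indicator_const _ (hFmeas n), measureReal_def, hFP n hn2,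
        ENNReal.toReal_ofReal (by positivity), smul_eq_mul]
    rw [hint]
    have h1 : a * Real.log (1 + a) ^ (1 - ε) ≤ a * (3 * L ^ (1 - ε)) :=
      mul_le_mul_of_nonneg_left hrq hapos.le
    have hmulL : L ^ (ε/2 - 1) * L ^ (1 - ε) = L ^ (-(ε/2)) := by
      rw [← Real.rpow_add hLpos]; ring_nf
    have h2 : a * (3 * L ^ (1 - ε)) = 3 * (n:ℝ)^2 * L ^ (-(ε/2)) := by
      rw [haval]; linear_combination (3 * (n:ℝ)^2) * hmulL
    have h3 : (1 / (2 * (n:ℝ)^2)) * (3 * (n:ℝ)^2 * L ^ (-(ε/2)))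
        = (3/2) * L ^ (-(ε/2)) := by
      field_simp
    have h4 : (3/2 : ℝ) * L ^ (-(ε/2)) ≤ 1 := by
      have h5 : (3/2:ℝ) ≤ L ^ (ε/2) := by
        have h6 : ((3/2:ℝ) ^ (2/ε)) ^ (ε/2) ≤ L ^ (ε/2) :=
          Real.rpow_le_rpow (by positivity) hLc (by positivity)
        rwa [← Real.rpow_mul (by norm_num), show (2/ε) * (ε/2) = 1 by field_simp,
          Real.rpow_one] at h6
      have h7 : (0:ℝ) < L ^ (ε/2) := Real.rpow_pos_of_pos hLpos _
      have hxy : L ^ (ε/2) * (L ^ (ε/2))⁻¹ = 1 := mul_inv_cancel₀ h7.ne'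
      rw [Real.rpow_neg hLpos.le]
      nlinarith [inv_pos.2 h7]
    calc (1 / (2 * (n:ℝ)^2)) * (a * Real.log (1 + a) ^ (1 - ε))
        ≤ (1 / (2 * (n:ℝ)^2)) * (a * (3 * L ^ (1 - ε))) :=
          mul_le_mul_of_nonneg_left h1 (by positivity)
      _ = (3/2) * L ^ (-(ε/2)) := by rw [h2, h3]
      _ ≤ 1 := h4
  -- luxemburg bound
  have lux : ∀ n, N ≤ n → luxemburgNorm P g (f n) ≤ lam n := by
    intro n hn
    obtain ⟨⟨hn3, hL1⟩, _⟩ := hN n hn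
    have hnR : (3:ℝ) ≤ (n:ℝ) := by exact_mod_cast hn3
    have hlampos : 0 < lam n := by
      rw [hlam]
      exact one_div_pos.2 (mul_pos (by linarith) (Real.rpow_pos_of_pos (by linarith) _))
    have hmem : lam n ∈ {l : ℝ | 0 < l ∧ ∫ ω, g (f n ω / l) ∂P ≤ 1} := by
      refine ⟨hlampos, ?_⟩
      simpa only [hg] using key n hn
    exact csInf_le ⟨0, fun x hx => hx.1.le⟩ hmem
  have luxnn : ∀ k : ℕ, 0 ≤ luxemburgNorm P g (f k) := by
    intro k
    exact Real.sInf_nonneg (fun x hx => hx.1.le)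
  refine ⟨⟨N, key⟩, ⟨N, fun n hn => by rw [← hlam n]; exact lux n hn⟩, ?_⟩
  have hS : Summable (fun n : ℕ => lam (n + N + 2)) := by
    refine Summable.congr
      ((summable_nat_add_iff N).2 (bertrand_summable (1 + ε/2) (by linarith))) ?_
    intro n
    rw [hlam]
    push_cast
    ring_nf
  have hS2 : Summable (fun n : ℕ => luxemburgNorm P g (f (n + N + 2))) :=
    Summable.of_nonneg_of_le (fun n => luxnn _)
      (fun n => lux (n + N + 2) (by omega)) hS
  exact (summable_nat_add_iff N).1 hS2
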